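/- Let n ≥ 2 and m ≥ 2 be integers and consider the lexicographic product P_n∘P_m of paths. Then γ_{t[1,2]}(P_n∘P_m) = 2⌈n/4⌉; moreover γ_{[1,2]}(P_n∘P_m) = ⌈n/3⌉ if m ∈ {2,3}, and γ_{[1,2]}(P_n∘P_m) = 2⌈n/4⌉ if m > 3. -/

import Mathlib

open SimpleGraph

/-- The lexicographic product of two simple graphs. -/
def SimpleGraph.lexProd {V W : Type*} (G : SimpleGraph V) (H : SimpleGraph W) :
    SimpleGraph (V × W) where
  Adj p q := G.Adj p.1 q.1 ∨ (p.1 = q.1 ∧ H.Adj p.2 q.2)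
  symm := by
    constructor
    rintro p q (h | ⟨e, h⟩)
    · exact Or.inl h.symm
    · exact Or.inr ⟨e.symm, h.symm⟩
  loopless := by
    constructor
    rintro p (h | ⟨_, h⟩)
    · exact G.loopless.irrefl _ h
    · exact H.loopless.irrefl _ h

/-- The `H`-layer of the product over a vertex `v` of `G`: all pairs with first
coordinate `v`. -/
def layer {V W : Type*} (v : V) : Set (V × W) := {p | p.1 = v}

/-- `S` is a `[1,k]`-set of `G`: every vertex outside `S` has at least `1` and at
most `k` neighbors in `S`. -/
def IsOneK {V : Type*} (G : SimpleGraph V) (k : ℕ) (S : Set V) : Prop :=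
  ∀ v ∉ S, 1 ≤ (G.neighborSet v ∩ S).ncard ∧ (G.neighborSet v ∩ S).ncard ≤ k

/-- `S` is a total `[1,k]`-set of `G`: every vertex has at least `1` and at most `k`
neighbors in `S`. -/
def IsTotalOneK {V : Type*} (G : SimpleGraph V) (k : ℕ) (S : Set V) : Prop :=
  ∀ v, 1 ≤ (G.neighborSet v ∩ S).ncard ∧ (G.neighborSet v ∩ S).ncard ≤ k

/-- `S` is an independent `[1,k]`-set of `G`. -/
def IsIndepOneK {V : Type*} (G : SimpleGraph V) (k : ℕ) (S : Set V) : Prop :=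
  IsOneK G k S ∧ ∀ v ∈ S, ∀ w ∈ S, ¬ G.Adj v w

/-- `S` is `j`-dependent: every vertex of `S` has at most `j` neighbors in `S`. -/
def IsJDep {V : Type*} (G : SimpleGraph V) (j : ℕ) (S : Set V) : Prop :=
  ∀ v ∈ S, (G.neighborSet v ∩ S).ncard ≤ j

/-- `S` is an efficient dominating set of `G`. -/
def IsEffDom {V : Type*} (G : SimpleGraph V) (S : Set V) : Prop :=
  (∀ v ∉ S, (G.neighborSet v ∩ S).ncard = 1) ∧ ∀ v ∈ S, (G.neighborSet v ∩ S).ncard = 0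

/-- Membership in `SD^j_{[1,k]}(G)`: a `j`-dependent `[1,k]`-set such that every
vertex of `S` with no neighbor in `S` is at distance at least `3` from every other
vertex of `S`. -/
def InSD {V : Type*} (G : SimpleGraph V) (k j : ℕ) (S : Set V) : Prop :=
  IsOneK G k S ∧ IsJDep G j S ∧
    ∀ v ∈ S, (G.neighborSet v ∩ S).ncard = 0 → ∀ v' ∈ S, v' ≠ v → 3 ≤ G.dist v v'

/-- The `[1,k]`-domination number `γ_{[1,k]}`. -/
noncomputable def gammaOneK {V : Type*} (G : SimpleGraph V) (k : ℕ) : ℕ :=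
  sInf {n | ∃ S : Set V, IsOneK G k S ∧ S.ncard = n}

/-- The total `[1,k]`-domination number `γ_{t[1,k]}`. -/
noncomputable def gammaTotalOneK {V : Type*} (G : SimpleGraph V) (k : ℕ) : ℕ :=
  sInf {n | ∃ S : Set V, IsTotalOneK G k S ∧ S.ncard = n}

/-- The `[1,k]`-independence number `γ_{i[1,k]}`. -/
noncomputable def gammaIndepOneK {V : Type*} (G : SimpleGraph V) (k : ℕ) : ℕ :=
  sInf {n | ∃ S : Set V, IsIndepOneK G k S ∧ S.ncard = n}

/-- `D` is a dominating set of `G`. -/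
def IsDomSet {V : Type*} (G : SimpleGraph V) (D : Set V) : Prop :=
  ∀ v ∉ D, ∃ u ∈ D, G.Adj v u

/-- `D` is a total dominating set of `G`. -/
def IsTotalDomSet {V : Type*} (G : SimpleGraph V) (D : Set V) : Prop :=
  ∀ v, ∃ u ∈ D, G.Adj v u

/-- The domination number `γ`. -/
noncomputable def gammaDom {V : Type*} (G : SimpleGraph V) : ℕ :=
  sInf {n | ∃ D : Set V, IsDomSet G D ∧ D.ncard = n}

/-- The total domination number `γ_t`. -/
noncomputable def gammaTotalDom {V : Type*} (G : SimpleGraph V) : ℕ :=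
  sInf {n | ∃ D : Set V, IsTotalDomSet G D ∧ D.ncard = n}
-- ===== abstract lemmas =====

section Abstract
open Finset

/-- sum over `range (n+1)` is at least 2, given only the C2 constraint. -/
lemma sumGe2 (n : ℕ) (a : ℕ → ℕ) (hn : 1 ≤ n) (h0 : a 0 = 0)
    (hsupp : ∀ i, n < i → a i = 0)
    (hC2 : ∀ i, 1 ≤ i → i ≤ n → a (i-1) = 0 → a (i+1) = 0 → 2 ≤ a i) :
    2 ≤ ∑ i ∈ range (n+1), a i := by
  by_contra h
  push_neg at h
  have hS : ∑ i ∈ range (n+1), a i ≤ 1 := by omega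
  -- at most one index has a nonzero value
  have huniq : ∀ i j, i < j → j ≤ n → a i = 0 ∨ a j = 0 := by
    intro i j hij hj
    by_contra hc
    push_neg at hc
    have h1 : a i + a j ≤ ∑ k ∈ range (n+1), a k := by
      have : ({i, j} : Finset ℕ) ⊆ range (n+1) := by
        intro x hx
        simp only [mem_insert, mem_singleton] at hx
        rcases hx with rfl | rfl <;> simp [Nat.lt_succ_iff] <;> omega
      calc a i + a j = ∑ k ∈ ({i, j} : Finset ℕ), a k := by
            rw [Finset.sum_pair (by omega)]
        _ ≤ _ := Finset.sum_le_sum_of_subset this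
    omega
  by_cases hex : ∃ j, 1 ≤ j ∧ j ≤ n ∧ 1 ≤ a j
  · obtain ⟨j, hj1, hjn, hja⟩ := hex
    have hjm : a (j-1) = 0 := by
      rcases Nat.eq_or_lt_of_le hj1 with h1 | h1
      · rw [← h1]; simpa using h0
      · rcases huniq (j-1) j (by omega) hjn with h | h
        · exact h
        · omega
    have hjp : a (j+1) = 0 := by
      by_cases hjn' : j + 1 ≤ n
      · rcases huniq j (j+1) (by omega) hjn' with h | h
        · omega
        · exact h
      · exact hsupp _ (by omega)
    have := hC2 j hj1 hjn hjm hjp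
    have : a j ≤ 1 := by
      have h1 : a j ≤ ∑ k ∈ range (n+1), a k :=
        Finset.single_le_sum (f := a) (fun i _ => Nat.zero_le _) (by simp [Nat.lt_succ_iff]; omega)
      omega
    omega
  · push_neg at hex
    have h2 : a 2 = 0 := by
      by_cases h2n : 2 ≤ n
      · have := hex 2 (by omega) h2n; omega
      · exact hsupp 2 (by omega)
    have := hC2 1 le_rfl hn (by simpa using h0) h2
    have := hex 1 le_rfl hn
    omega

/-- The main abstract lower bound for the total / m ≥ 4 case. -/
lemma sumGeMain (n : ℕ) (a : ℕ → ℕ) (h0 : a 0 = 0)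
    (hsupp : ∀ i, n < i → a i = 0)
    (hC1 : ∀ i, 1 ≤ i → i ≤ n → 1 ≤ a i → a (i-1) + a (i+1) ≤ 1)
    (hC2 : ∀ i, 1 ≤ i → i ≤ n → a (i-1) = 0 → a (i+1) = 0 → 2 ≤ a i) :
    2 * ((n + 3) / 4) ≤ ∑ i ∈ range (n+1), a i := by
  induction n using Nat.strong_induction_on generalizing a with
  | _ n IH =>
  by_cases hn4 : n ≤ 4
  · rcases Nat.eq_zero_or_pos n with rfl | hn1
    · simp
    · have := sumGe2 n a hn1 h0 hsupp hC2
      omega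
  push_neg at hn4
  -- find a cut point c with a (c+1) = 0, n-4 ≤ c ≤ n-1, and peeled weight ≥ 2
  have key : ∃ c, a (c+1) = 0 ∧ n - 4 ≤ c ∧ 1 ≤ c ∧ c ≤ n - 1 ∧
      2 ≤ ∑ i ∈ Ico (c+1) (n+1), a i := by
    have hsn : a (n+1) = 0 := hsupp _ (by omega)
    have sum_tail : ∀ c, c ≤ n → ∑ i ∈ Ico (c+1) (n+1), a i = ∑ i ∈ Ico (c+1) (n+1), a i := fun _ _ => rfl
    rcases Nat.lt_or_ge (a n) 1 with hA | hA
    · -- a n = 0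
      have hA0 : a n = 0 := by omega
      have hB : 1 ≤ a (n-1) := by
        by_contra hB
        have := hC2 n (by omega) le_rfl (by omega) hsn
        omega
      rcases Nat.lt_or_ge (a (n-1)) 2 with hB1 | hB2
      · -- a (n-1) = 1
        have hB1' : a (n-1) = 1 := by omega
        have hC : 1 ≤ a (n-2) := by
          by_contra hC
          have := hC2 (n-1) (by omega) (by omega)
            (by rw [show n - 1 - 1 = n - 2 by omega]; omega)
            (by rw [show n - 1 + 1 = n by omega]; exact hA0)
          omega
        have hCA := hC1 (n-1) (by omega) (by omega) (by omega)
        rw [show n - 1 - 1 = n - 2 by omega, show n - 1 + 1 = n by omega] at hCA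
        have hC1' : a (n-2) = 1 := by omega
        have hD : a (n-3) = 0 := by
          have := hC1 (n-2) (by omega) (by omega) (by omega)
          rw [show n - 2 - 1 = n - 3 by omega, show n - 2 + 1 = n - 1 by omega] at this
          omega
        refine ⟨n - 4, by rw [show n - 4 + 1 = n - 3 by omega]; exact hD, by omega, by omega, by omega, ?_⟩
        have : Ico (n - 4 + 1) (n+1) = {n - 3, n - 2, n - 1, n} := by
          ext x; simp [Finset.mem_Ico, Finset.mem_insert]; omega
        rw [this]
        rw [Finset.sum_insert (by simp; omega), Finset.sum_insert (by simp; omega),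
          Finset.sum_insert (by simp; omega), Finset.sum_singleton]
        omega
      · -- a (n-1) ≥ 2
        have hC : a (n-2) = 0 := by
          by_contra hC
          have h1 := hC1 (n-1) (by omega) (by omega) (by omega)
          rw [show n - 1 - 1 = n - 2 by omega, show n - 1 + 1 = n by omega] at h1
          have h2 := hC1 (n-2) (by omega) (by omega) (by omega)
          rw [show n - 2 + 1 = n - 1 by omega] at h2
          omega
        refine ⟨n - 3, by rw [show n - 3 + 1 = n - 2 by omega]; exact hC, by omega, by omega, by omega, ?_⟩
        have : Ico (n - 3 + 1) (n+1) = {n - 2, n - 1, n} := by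
          ext x; simp [Finset.mem_Ico, Finset.mem_insert]; omega
        rw [this, Finset.sum_insert (by simp; omega), Finset.sum_insert (by simp; omega),
          Finset.sum_singleton]
        omega
    · rcases Nat.lt_or_ge (a n) 2 with hA1 | hA2
      · -- a n = 1
        have hB : 1 ≤ a (n-1) := by
          by_contra hB
          have := hC2 n (by omega) le_rfl (by omega) hsn
          omega
        have h1 := hC1 n (by omega) le_rfl hA
        have hB1 : a (n-1) = 1 := by omega
        have hCz : a (n-2) = 0 := by
          have h2 := hC1 (n-1) (by omega) (by omega) (by omega)
          rw [show n - 1 - 1 = n - 2 by omega, show n - 1 + 1 = n by omega] at h2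
          omega
        refine ⟨n - 3, by rw [show n - 3 + 1 = n - 2 by omega]; exact hCz, by omega, by omega, by omega, ?_⟩
        have : Ico (n - 3 + 1) (n+1) = {n - 2, n - 1, n} := by
          ext x; simp [Finset.mem_Ico, Finset.mem_insert]; omega
        rw [this, Finset.sum_insert (by simp; omega), Finset.sum_insert (by simp; omega),
          Finset.sum_singleton]
        omega
      · -- a n ≥ 2
        have hB : a (n-1) = 0 := by
          by_contra hB
          have h1 := hC1 n (by omega) le_rfl (by omega)
          have h2 := hC1 (n-1) (by omega) (by omega) (by omega)
          rw [show n - 1 + 1 = n by omega] at h2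
          omega
        refine ⟨n - 2, by rw [show n - 2 + 1 = n - 1 by omega]; exact hB, by omega, by omega, by omega, ?_⟩
        have : Ico (n - 2 + 1) (n+1) = {n - 1, n} := by
          ext x; simp [Finset.mem_Ico, Finset.mem_insert]; omega
        rw [this, Finset.sum_insert (by simp; omega), Finset.sum_singleton]
        omega
  obtain ⟨c, hcut, hc4, hc1, hcn, hpeel⟩ := key
  set a' : ℕ → ℕ := fun i => if i ≤ c then a i else 0 with ha'
  have hIH : 2 * ((c + 3) / 4) ≤ ∑ i ∈ range (c+1), a' i := by
    apply IH c (by omega)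
    · simpa [ha'] using h0
    · intro i hi; simp [ha', show ¬ i ≤ c by omega]
    · intro i hi1 hic hai
      have hic' : i ≤ c := hic
      have h1 := hC1 i hi1 (by omega) (by simpa [ha', hic'] using hai)
      simp only [ha']
      split_ifs <;> omega
    · intro i hi1 hic him hip
      have hic' : i ≤ c := hic
      have him' : a (i-1) = 0 := by simpa [ha', show i - 1 ≤ c by omega] using him
      have hip' : a (i+1) = 0 := by
        by_cases h : i + 1 ≤ c
        · simpa [ha', h] using hip
        · have : i = c := by omega
          rw [this]; exact hcut
      have := hC2 i hi1 (by omega) him' hip'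
      simpa [ha', hic'] using this
  have hsum_eq : ∑ i ∈ range (c+1), a' i = ∑ i ∈ range (c+1), a i := by
    apply Finset.sum_congr rfl
    intro i hi
    simp only [mem_range] at hi
    simp [ha', show i ≤ c by omega]
  have hsplit : ∑ i ∈ range (n+1), a i = ∑ i ∈ range (c+1), a i + ∑ i ∈ Ico (c+1) (n+1), a i := by
    rw [Finset.range_eq_Ico, ← Finset.sum_Ico_consecutive a (by omega : 0 ≤ c+1) (by omega : c+1 ≤ n+1), Finset.range_eq_Ico]
  rw [hsum_eq] at hIH
  omega


lemma sumGeThird (n : ℕ) (a : ℕ → ℕ) (h0 : a 0 = 0)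
    (hsupp : ∀ i, n < i → a i = 0)
    (hD : ∀ i, 1 ≤ i → i ≤ n → 1 ≤ a (i-1) + a i + a (i+1)) :
    (n + 2) / 3 ≤ ∑ i ∈ range (n+1), a i := by
  induction n using Nat.strong_induction_on generalizing a with
  | _ n IH =>
  by_cases hn3 : n ≤ 3
  · rcases Nat.eq_zero_or_pos n with rfl | hn1
    · simp
    · -- goal: 1 ≤ sum
      have h1 := hD 1 le_rfl hn1
      rw [show (1:ℕ) - 1 = 0 by rfl, h0, show (1:ℕ) + 1 = 2 by rfl] at h1
      have hw : ∃ j, 1 ≤ j ∧ j ≤ n ∧ 1 ≤ a j := by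
        by_cases h2n : 2 ≤ n
        · rcases Nat.lt_or_ge (a 1) 1 with h | h
          · exact ⟨2, by omega, h2n, by omega⟩
          · exact ⟨1, le_rfl, hn1, h⟩
        · have h2 : a 2 = 0 := hsupp 2 (by omega)
          exact ⟨1, le_rfl, hn1, by omega⟩
      obtain ⟨j, hj1, hjn, hja⟩ := hw
      have : a j ≤ ∑ i ∈ range (n+1), a i :=
        Finset.single_le_sum (f := a) (fun i _ => Nat.zero_le _) (by simp; omega)
      omega
  push_neg at hn3
  have hsn : a (n+1) = 0 := hsupp _ (by omega)
  -- helper to finish given a cut c, truncated function a'' (= a below c, a''(c) = a c + e)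
  rcases Nat.eq_zero_or_pos (a (n-2)) with hC | hC
  · -- cut at c = n - 3, peel = a(n-1) + a n ≥ 1
    set c := n - 3 with hc
    set a' : ℕ → ℕ := fun i => if i ≤ c then a i else 0 with ha'
    have hIH : (c + 2) / 3 ≤ ∑ i ∈ range (c+1), a' i := by
      apply IH c (by omega)
      · simpa [ha'] using h0
      · intro i hi; simp [ha', show ¬ i ≤ c by omega]
      · intro i hi1 hic
        have h := hD i hi1 (by omega)
        by_cases hicc : i = c
        · have hA1 : a (i+1) = 0 := by rw [hicc, show c + 1 = n - 2 by omega]; exact hC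
          simp only [ha', if_pos (show i - 1 ≤ c by omega), if_pos (show i ≤ c from hic),
            if_neg (show ¬ (i+1 ≤ c) by omega)]
          omega
        · simp only [ha', if_pos (show i - 1 ≤ c by omega), if_pos (show i ≤ c from hic),
            if_pos (show i + 1 ≤ c by omega)]
          omega
    have hpeel : 1 ≤ a (n-1) + a n := by
      have := hD (n-1) (by omega) (by omega)
      rw [show n - 1 - 1 = n - 2 by omega, show n - 1 + 1 = n by omega] at this
      omega
    have hsum_eq : ∑ i ∈ range (c+1), a' i = ∑ i ∈ range (c+1), a i :=
      Finset.sum_congr rfl fun i hi => by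
        simp only [mem_range] at hi; simp [ha', show i ≤ c by omega]
    have hsplit : ∑ i ∈ range (n+1), a i = ∑ i ∈ range (c+1), a i + ∑ i ∈ Ico (c+1) (n+1), a i := by
      rw [Finset.range_eq_Ico, ← Finset.sum_Ico_consecutive a (by omega : 0 ≤ c+1) (by omega : c+1 ≤ n+1), Finset.range_eq_Ico]
    have htail : a (n-1) + a n ≤ ∑ i ∈ Ico (c+1) (n+1), a i := by
      have hsub : ({n-1, n} : Finset ℕ) ⊆ Ico (c+1) (n+1) := by
        intro x hx; simp only [mem_insert, mem_singleton] at hx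
        rcases hx with rfl | rfl <;> simp [mem_Ico] <;> omega
      calc a (n-1) + a n = ∑ k ∈ ({n-1, n} : Finset ℕ), a k := by
            rw [Finset.sum_pair (by omega)]
        _ ≤ _ := Finset.sum_le_sum_of_subset hsub
    rw [hsum_eq] at hIH
    omega
  · rcases Nat.eq_zero_or_pos (a (n-1)) with hB | hB
    · -- cut at c = n-2, peel = a n ≥ 1
      set c := n - 2 with hc
      set a' : ℕ → ℕ := fun i => if i ≤ c then a i else 0 with ha'
      have hIH : (c + 2) / 3 ≤ ∑ i ∈ range (c+1), a' i := by
        apply IH c (by omega)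
        · simpa [ha'] using h0
        · intro i hi; simp [ha', show ¬ i ≤ c by omega]
        · intro i hi1 hic
          have h := hD i hi1 (by omega)
          by_cases hicc : i = c
          · have : a (i+1) = 0 := by rw [hicc, show c + 1 = n - 1 by omega]; exact hB
            simp only [ha', if_pos (show i - 1 ≤ c by omega), if_pos (show i ≤ c from hic),
              if_neg (show ¬ (i+1 ≤ c) by omega)]
            omega
          · simp only [ha', if_pos (show i - 1 ≤ c by omega), if_pos (show i ≤ c from hic),
              if_pos (show i + 1 ≤ c by omega)]
            omega
      have hpeel : 1 ≤ a n := by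
        have := hD n (by omega) le_rfl
        rw [show n - 1 = c + 1 by omega] at hB
        rw [show n - 1 = c + 1 by omega] at this
        omega
      have hsum_eq : ∑ i ∈ range (c+1), a' i = ∑ i ∈ range (c+1), a i :=
        Finset.sum_congr rfl fun i hi => by
          simp only [mem_range] at hi; simp [ha', show i ≤ c by omega]
      have hsplit : ∑ i ∈ range (n+1), a i = ∑ i ∈ range (c+1), a i + ∑ i ∈ Ico (c+1) (n+1), a i := by
        rw [Finset.range_eq_Ico, ← Finset.sum_Ico_consecutive a (by omega : 0 ≤ c+1) (by omega : c+1 ≤ n+1), Finset.range_eq_Ico]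
      have htail : a n ≤ ∑ i ∈ Ico (c+1) (n+1), a i :=
        Finset.single_le_sum (f := a) (fun i _ => Nat.zero_le _) (by simp [mem_Ico]; omega)
      rw [hsum_eq] at hIH
      omega
    · -- both a(n-2), a(n-1) ≥ 1 : cut at c = n-3 with bumped value at c
      set c := n - 3 with hc
      set a' : ℕ → ℕ := fun i => if i = c then a c + 1 else if i ≤ c then a i else 0 with ha'
      have hIH : (c + 2) / 3 ≤ ∑ i ∈ range (c+1), a' i := by
        apply IH c (by omega)
        · simp only [ha']; rw [if_neg (by omega), if_pos (by omega)]; exact h0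
        · intro i hi; simp only [ha']; rw [if_neg (by omega), if_neg (by omega)]
        · intro i hi1 hic
          have h := hD i hi1 (by omega)
          by_cases hicc : i = c
          · simp only [ha', if_pos hicc]
            omega
          · have h1 : i + 1 ≤ c := by omega
            simp only [ha', if_neg (show i - 1 ≠ c by omega), if_pos (show i - 1 ≤ c by omega),
              if_neg hicc, if_pos (show i ≤ c from hic)]
            by_cases h2 : i + 1 = c
            · rw [if_pos h2]; omega
            · rw [if_neg h2, if_pos h1]; omega
      have hsum_eq : ∑ i ∈ range (c+1), a' i = (∑ i ∈ range (c+1), a i) + 1 := by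
        rw [Finset.sum_range_succ, Finset.sum_range_succ]
        have : ∑ i ∈ range c, a' i = ∑ i ∈ range c, a i :=
          Finset.sum_congr rfl fun i hi => by
            simp only [mem_range] at hi
            simp only [ha', if_neg (by omega : ¬ i = c), if_pos (by omega : i ≤ c)]
        rw [this]
        simp only [ha', if_pos rfl]
        omega
      have hsplit : ∑ i ∈ range (n+1), a i = ∑ i ∈ range (c+1), a i + ∑ i ∈ Ico (c+1) (n+1), a i := by
        rw [Finset.range_eq_Ico, ← Finset.sum_Ico_consecutive a (by omega : 0 ≤ c+1) (by omega : c+1 ≤ n+1), Finset.range_eq_Ico]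
      have htail : a (n-2) + a (n-1) ≤ ∑ i ∈ Ico (c+1) (n+1), a i := by
        have hsub : ({n-2, n-1} : Finset ℕ) ⊆ Ico (c+1) (n+1) := by
          intro x hx; simp only [mem_insert, mem_singleton] at hx
          rcases hx with rfl | rfl <;> simp [mem_Ico] <;> omega
        calc a (n-2) + a (n-1) = ∑ k ∈ ({n-2, n-1} : Finset ℕ), a k := by
              rw [Finset.sum_pair (by omega)]
          _ ≤ _ := Finset.sum_le_sum_of_subset hsub
      rw [hsum_eq] at hIH
      omega

end Abstract


-- ===== auxiliary development =====
section Bridge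

variable {n m : ℕ}

abbrev PG (n m : ℕ) : SimpleGraph (Fin n × Fin m) :=
  (SimpleGraph.pathGraph n).lexProd (SimpleGraph.pathGraph m)

lemma PG_adj {p q : Fin n × Fin m} : (PG n m).Adj p q ↔
    (p.1.val + 1 = q.1.val ∨ q.1.val + 1 = p.1.val) ∨
      (p.1 = q.1 ∧ (p.2.val + 1 = q.2.val ∨ q.2.val + 1 = p.2.val)) := by
  constructor
  · rintro (h | ⟨e, h⟩)
    · exact Or.inl (pathGraph_adj.mp h)
    · exact Or.inr ⟨e, pathGraph_adj.mp h⟩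
  · rintro (h | ⟨e, h⟩)
    · exact Or.inl (pathGraph_adj.mpr h)
    · exact Or.inr ⟨e, pathGraph_adj.mpr h⟩

/-- the part of `S` in column `k` (0-indexed). -/
def colS (S : Set (Fin n × Fin m)) (k : ℕ) : Set (Fin n × Fin m) := {p | p ∈ S ∧ p.1.val = k}

noncomputable def cc (S : Set (Fin n × Fin m)) (k : ℕ) : ℕ := (colS S k).ncard

lemma colS_empty (S : Set (Fin n × Fin m)) {k : ℕ} (hk : n ≤ k) : colS S k = ∅ := by
  ext p; simp only [colS, Set.mem_setOf_eq, Set.mem_empty_iff_false, iff_false]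
  rintro ⟨-, h⟩; have := p.1.isLt; omega

lemma cc_out (S : Set (Fin n × Fin m)) {k : ℕ} (hk : n ≤ k) : cc S k = 0 := by
  rw [cc, colS_empty S hk, Set.ncard_empty]

lemma colS_eq_empty_of_cc {S : Set (Fin n × Fin m)} {k : ℕ} (h : cc S k = 0) :
    colS S k = ∅ := by
  rwa [cc, Set.ncard_eq_zero (Set.toFinite _)] at h

lemma cc_pos_of_mem {S : Set (Fin n × Fin m)} {k : ℕ} {p : Fin n × Fin m}
    (hp : p ∈ S) (hk : p.1.val = k) : 1 ≤ cc S k :=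
  (Set.ncard_pos (Set.toFinite _)).mpr ⟨p, hp, hk⟩

lemma sum_cc (S : Set (Fin n × Fin m)) : ∑ k ∈ Finset.range n, cc S k = S.ncard := by
  classical
  have hfin : S.Finite := Set.toFinite S
  rw [Set.ncard_eq_toFinset_card S hfin]
  rw [Finset.card_eq_sum_card_fiberwise (f := fun p => p.1.val) (t := Finset.range n)
    (fun p _ => Finset.mem_range.mpr p.1.isLt)]
  apply Finset.sum_congr rfl
  intro k _
  rw [cc, Set.ncard_eq_toFinset_card _ (Set.toFinite _)]
  congr 1
  ext p
  simp only [Finset.mem_filter, Set.Finite.mem_toFinset, colS, Set.mem_setOf_eq]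

/-- cross-column members of `S` are neighbours. -/
lemma mem_nbr_cross {S : Set (Fin n × Fin m)} {x : Fin n} {y : Fin m} {p : Fin n × Fin m}
    (hp : p ∈ S) (h : p.1.val = x.val + 1 ∨ p.1.val + 1 = x.val) :
    p ∈ (PG n m).neighborSet (x, y) ∩ S := by
  refine ⟨?_, hp⟩
  rw [mem_neighborSet, PG_adj]
  exact Or.inl (by tauto)

lemma colS_subset_nbr {S : Set (Fin n × Fin m)} {x : Fin n} {y : Fin m} {k : ℕ}
    (h : k = x.val + 1 ∨ k + 1 = x.val) :
    colS S k ⊆ (PG n m).neighborSet (x, y) ∩ S := by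
  rintro p ⟨hp, hk⟩
  exact mem_nbr_cross hp (by omega)

lemma colS_disj {S : Set (Fin n × Fin m)} {k l : ℕ} (h : k ≠ l) :
    Disjoint (colS S k) (colS S l) := by
  rw [Set.disjoint_left]
  rintro p ⟨-, h1⟩ ⟨-, h2⟩
  omega

/-- Key upper-bound extraction: if some vertex `(x,y1)` adjacent (within its column)
to an `S`-vertex `(x,y0)` has at most 2 neighbours in `S`, then the neighbouring
columns carry at most one `S`-vertex between them. -/
lemma cross_le_one {S : Set (Fin n × Fin m)} {x : Fin n} {y0 y1 : Fin m}
    (hs : (x, y0) ∈ S) (hadj : y1.val + 1 = y0.val ∨ y0.val + 1 = y1.val)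
    (hle : ((PG n m).neighborSet (x, y1) ∩ S).ncard ≤ 2) :
    cc S (x.val + 1) ≤ 1 ∧ (0 < x.val → cc S (x.val - 1) + cc S (x.val + 1) ≤ 1) := by
  have hm : (x, y0) ∈ (PG n m).neighborSet (x, y1) ∩ S := by
    refine ⟨?_, hs⟩
    rw [mem_neighborSet, PG_adj]
    exact Or.inr ⟨rfl, by tauto⟩
  have hs0 : (x, y0) ∉ colS S (x.val + 1) := by
    rintro ⟨-, h⟩; simp at h
  have hnotm : ∀ l, l ≠ x.val → (x, y0) ∉ colS S l := by
    rintro l hl ⟨-, h⟩; simp at h; omega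
  constructor
  · have hsub : insert ((x, y0)) (colS S (x.val + 1)) ⊆ (PG n m).neighborSet (x, y1) ∩ S := by
      rw [Set.insert_subset_iff]
      exact ⟨hm, colS_subset_nbr (Or.inl rfl)⟩
    have h1 : (insert ((x, y0)) (colS S (x.val + 1))).ncard = cc S (x.val + 1) + 1 :=
      Set.ncard_insert_of_notMem (hnotm _ (by omega)) (Set.toFinite _)
    have := Set.ncard_le_ncard hsub (Set.toFinite _)
    rw [h1] at this
    omega
  · intro hx
    have hsub : insert ((x, y0)) (colS S (x.val - 1) ∪ colS S (x.val + 1)) ⊆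
        (PG n m).neighborSet (x, y1) ∩ S := by
      rw [Set.insert_subset_iff]
      refine ⟨hm, Set.union_subset (colS_subset_nbr (Or.inr (by omega)))
        (colS_subset_nbr (Or.inl rfl))⟩
    have hcard : (insert ((x, y0)) (colS S (x.val - 1) ∪ colS S (x.val + 1))).ncard
        = cc S (x.val - 1) + cc S (x.val + 1) + 1 := by
      rw [Set.ncard_insert_of_notMem (by
        rintro (h | h)
        · exact hnotm _ (by omega) h
        · exact hnotm _ (by omega) h) (Set.toFinite _)]
      rw [Set.ncard_union_eq (colS_disj (by omega)) (Set.toFinite _) (Set.toFinite _)]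
      rfl
    have := Set.ncard_le_ncard hsub (Set.toFinite _)
    rw [hcard] at this
    omega

/-- Key emptiness extraction: a vertex in column `k` whose in-column potential
neighbours are not in `S`, when the adjacent columns are empty, has no neighbours
in `S` at all. -/
lemma nbr_empty {S : Set (Fin n × Fin m)} {x : Fin n} {y : Fin m}
    (hkm : 0 < x.val → cc S (x.val - 1) = 0) (hkp : cc S (x.val + 1) = 0)
    (hy : ∀ j : Fin m, (x, j) ∈ S → ¬ (y.val + 1 = j.val ∨ j.val + 1 = y.val)) :
    (PG n m).neighborSet (x, y) ∩ S = ∅ := by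
  ext p
  simp only [Set.mem_inter_iff, mem_neighborSet, Set.mem_empty_iff_false, iff_false, not_and]
  intro hadj hp
  rw [PG_adj] at hadj
  dsimp only at hadj
  rcases hadj with (h | h) | ⟨e, h⟩
  · have : p ∈ colS S (x.val + 1) := ⟨hp, by omega⟩
    rw [colS_eq_empty_of_cc hkp] at this
    exact this
  · have hx : 0 < x.val := by omega
    have : p ∈ colS S (x.val - 1) := ⟨hp, by omega⟩
    rw [colS_eq_empty_of_cc (hkm hx)] at this
    exact this
  · exact hy p.2 (by rw [e, Prod.mk.eta]; exact hp) (by simpa using h)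

section Constraints

variable {S : Set (Fin n × Fin m)}

lemma total_C1 (hm : 2 ≤ m)
    (hS : ∀ v, ((PG n m).neighborSet v ∩ S).ncard ≤ 2)
    {k : ℕ} (h1 : 1 ≤ cc S k) :
    cc S (k+1) ≤ 1 ∧ (0 < k → cc S (k-1) + cc S (k+1) ≤ 1) := by
  obtain ⟨p, hpS, hpk⟩ := (Set.ncard_pos (Set.toFinite _)).mp h1
  set y0 := p.2 with hy0
  have hy1 : ∃ y1 : Fin m, y1.val + 1 = y0.val ∨ y0.val + 1 = y1.val := by
    by_cases h : y0.val = 0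
    · exact ⟨⟨1, by omega⟩, by right; simp; omega⟩
    · exact ⟨⟨y0.val - 1, by have := y0.isLt; omega⟩, by left; simp; omega⟩
  obtain ⟨y1, hadj⟩ := hy1
  have hs : (p.1, y0) ∈ S := by rw [hy0, Prod.mk.eta]; exact hpS
  have := cross_le_one hs hadj (hS (p.1, y1))
  rwa [hpk] at this

lemma total_C2 (hm : 2 ≤ m)
    (hS : ∀ v, 1 ≤ ((PG n m).neighborSet v ∩ S).ncard)
    {k : ℕ} (hk : k < n) (hkm : 0 < k → cc S (k-1) = 0) (hkp : cc S (k+1) = 0) :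
    2 ≤ cc S k := by
  by_contra hcc
  push_neg at hcc
  interval_cases hya : cc S k
  · -- empty column
    have hcol : colS S k = ∅ := colS_eq_empty_of_cc hya
    set x : Fin n := ⟨k, hk⟩ with hx
    set y : Fin m := ⟨0, by omega⟩ with hy
    have hemp : (PG n m).neighborSet (x, y) ∩ S = ∅ := by
      apply nbr_empty hkm hkp
      intro j hj
      exact absurd (show (x, j) ∈ colS S k from ⟨hj, rfl⟩) (by rw [hcol]; simp)
    have := hS (x, y)
    rw [hemp, Set.ncard_empty] at this
    omega
  · -- single vertex column
    obtain ⟨s0, hcol⟩ := Set.ncard_eq_one.mp hya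
    have hs0 : s0 ∈ colS S k := by rw [hcol]; rfl
    obtain ⟨hs0S, hs0k⟩ := hs0
    have hemp : (PG n m).neighborSet (s0.1, s0.2) ∩ S = ∅ := by
      apply nbr_empty (by rw [hs0k]; exact hkm) (by rw [hs0k]; exact hkp)
      intro j hj
      have : (s0.1, j) ∈ colS S k := ⟨hj, hs0k⟩
      rw [hcol, Set.mem_singleton_iff] at this
      have hj2 : j = s0.2 := congrArg Prod.snd this
      rw [hj2]
      omega
    have := hS (s0.1, s0.2)
    rw [hemp, Set.ncard_empty] at this
    omega

lemma oneK_C2 (hm : 4 ≤ m)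
    (hS : ∀ v ∉ S, 1 ≤ ((PG n m).neighborSet v ∩ S).ncard)
    {k : ℕ} (hk : k < n) (hkm : 0 < k → cc S (k-1) = 0) (hkp : cc S (k+1) = 0) :
    2 ≤ cc S k := by
  by_contra hcc
  push_neg at hcc
  interval_cases hya : cc S k
  · have hcol : colS S k = ∅ := colS_eq_empty_of_cc hya
    set x : Fin n := ⟨k, hk⟩ with hx
    set y : Fin m := ⟨0, by omega⟩ with hy
    have hvS : (x, y) ∉ S := fun h =>
      absurd (show (x, y) ∈ colS S k from ⟨h, rfl⟩) (by rw [hcol]; simp)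
    have hemp : (PG n m).neighborSet (x, y) ∩ S = ∅ := by
      apply nbr_empty hkm hkp
      intro j hj
      exact absurd (show (x, j) ∈ colS S k from ⟨hj, rfl⟩) (by rw [hcol]; simp)
    have := hS (x, y) hvS
    rw [hemp, Set.ncard_empty] at this
    omega
  · obtain ⟨s0, hcol⟩ := Set.ncard_eq_one.mp hya
    have hs0 : s0 ∈ colS S k := by rw [hcol]; rfl
    obtain ⟨hs0S, hs0k⟩ := hs0
    have hy2 : ∃ y2 : Fin m, y2.val ≠ s0.2.val ∧ ¬(y2.val + 1 = s0.2.val ∨ s0.2.val + 1 = y2.val) := by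
      by_cases h : s0.2.val ≤ 1
      · exact ⟨⟨s0.2.val + 2, by omega⟩, by simp; omega⟩
      · exact ⟨⟨s0.2.val - 2, by have := s0.2.isLt; omega⟩, by simp; omega⟩
    obtain ⟨y2, hy2ne, hy2na⟩ := hy2
    have hvS : (s0.1, y2) ∉ S := by
      intro h
      have : (s0.1, y2) ∈ colS S k := ⟨h, hs0k⟩
      rw [hcol, Set.mem_singleton_iff] at this
      exact hy2ne (congrArg (fun q => (Prod.snd q).val) this)
    have hemp : (PG n m).neighborSet (s0.1, y2) ∩ S = ∅ := by
      apply nbr_empty (by rw [hs0k]; exact hkm) (by rw [hs0k]; exact hkp)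
      intro j hj
      have : (s0.1, j) ∈ colS S k := ⟨hj, hs0k⟩
      rw [hcol, Set.mem_singleton_iff] at this
      have hj2 : j = s0.2 := congrArg Prod.snd this
      rw [hj2]
      exact hy2na
    have := hS (s0.1, y2) hvS
    rw [hemp, Set.ncard_empty] at this
    omega

lemma boundary_pair {T : Set (Fin m)} (hne : T.Nonempty) (hnf : ∃ j, j ∉ T) :
    ∃ y0 y1 : Fin m, y0 ∈ T ∧ y1 ∉ T ∧ (y1.val + 1 = y0.val ∨ y0.val + 1 = y1.val) := by
  by_contra hcon
  push_neg at hcon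
  obtain ⟨w, hw⟩ := hne
  have hm0 : 0 < m := w.pos
  have key : ∀ k, (hk : k < m) → ((⟨k, hk⟩ : Fin m) ∈ T ↔ (⟨0, hm0⟩ : Fin m) ∈ T) := by
    intro k
    induction k with
    | zero => intro hk; rfl
    | succ k ih =>
      intro hk
      have hk' : k < m := by omega
      rw [← ih hk']
      constructor
      · intro h
        by_contra h2
        have := hcon ⟨k+1, hk⟩ ⟨k, hk'⟩ h h2
        simp only [Fin.val_mk] at this
        omega
      · intro h
        by_contra h2
        have := hcon ⟨k, hk'⟩ ⟨k+1, hk⟩ h h2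
        simp only [Fin.val_mk] at this
        omega
  obtain ⟨z, hz⟩ := hnf
  have h1 : w ∈ T ↔ (⟨0, hm0⟩ : Fin m) ∈ T := by
    have := key w.val w.isLt
    rwa [Fin.eta] at this
  have h2 : z ∈ T ↔ (⟨0, hm0⟩ : Fin m) ∈ T := by
    have := key z.val z.isLt
    rwa [Fin.eta] at this
  tauto

lemma oneK_C1 (hm : 2 ≤ m)
    (hS : ∀ v ∉ S, ((PG n m).neighborSet v ∩ S).ncard ≤ 2)
    (hnf : ∀ x : Fin n, ∃ j, (x, j) ∉ S)
    {k : ℕ} (h1 : 1 ≤ cc S k) :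
    cc S (k+1) ≤ 1 ∧ (0 < k → cc S (k-1) + cc S (k+1) ≤ 1) := by
  obtain ⟨p, hpS, hpk⟩ := (Set.ncard_pos (Set.toFinite _)).mp h1
  set T : Set (Fin m) := {j | (p.1, j) ∈ S} with hT
  have hTne : T.Nonempty := ⟨p.2, by simp only [hT, Set.mem_setOf_eq, Prod.mk.eta]; exact hpS⟩
  obtain ⟨y0, y1, hy0, hy1, hadj⟩ := boundary_pair hTne (hnf p.1)
  have := cross_le_one (show (p.1, y0) ∈ S from hy0) hadj (hS (p.1, y1) hy1)
  rwa [hpk] at this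

lemma oneK_D (hm0 : 0 < m)
    (hS : ∀ v ∉ S, 1 ≤ ((PG n m).neighborSet v ∩ S).ncard)
    {k : ℕ} (hk : k < n) :
    1 ≤ (if 0 < k then cc S (k-1) else 0) + cc S k + cc S (k+1) := by
  set x : Fin n := ⟨k, hk⟩ with hx
  set y : Fin m := ⟨0, hm0⟩ with hy
  have hxv : x.val = k := rfl
  by_cases hv : (x, y) ∈ S
  · have := cc_pos_of_mem hv hxv
    split_ifs <;> omega
  · have h1 := hS _ hv
    have h2 : 0 < ((PG n m).neighborSet (x, y) ∩ S).ncard := by omega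
    obtain ⟨q, hadj, hqS⟩ := (Set.ncard_pos (Set.toFinite _)).mp h2
    rw [mem_neighborSet, PG_adj] at hadj
    dsimp only at hadj
    rcases hadj with (h | h) | ⟨e, h⟩
    · have : 1 ≤ cc S (k+1) := cc_pos_of_mem hqS (by omega)
      split_ifs <;> omega
    · have hkpos : 0 < k := by omega
      have : 1 ≤ cc S (k-1) := cc_pos_of_mem hqS (by omega)
      rw [if_pos hkpos]
      omega
    · have : 1 ≤ cc S k := cc_pos_of_mem hqS (by rw [← e])
      split_ifs <;> omega

lemma full_univ (hm : 3 ≤ m)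
    (hS : ∀ v ∉ S, ((PG n m).neighborSet v ∩ S).ncard ≤ 2)
    (x0 : Fin n) (hfull : ∀ j, (x0, j) ∈ S) : S = Set.univ := by
  have hstep : ∀ x : Fin n, (∀ j, (x, j) ∈ S) → ∀ x' : Fin n,
      (x.val + 1 = x'.val ∨ x'.val + 1 = x.val) → ∀ j, (x', j) ∈ S := by
    intro x hx x' hadjx j
    by_contra hj
    have hsub : (fun t : Fin m => (x, t)) '' Set.univ ⊆ (PG n m).neighborSet (x', j) ∩ S := by
      rintro p ⟨t, -, rfl⟩
      refine ⟨?_, hx t⟩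
      rw [mem_neighborSet, PG_adj]
      exact Or.inl (by dsimp; omega)
    have hcard : ((fun t : Fin m => (x, t)) '' Set.univ).ncard = m := by
      rw [Set.ncard_image_of_injective _ (fun a b h => by simpa using congrArg Prod.snd h)]
      simp [Set.ncard_univ]
    have hle := Set.ncard_le_ncard hsub (Set.toFinite _)
    rw [hcard] at hle
    have := hS (x', j) hj
    omega
  have up : ∀ t, ∀ (h : x0.val + t < n), ∀ j, ((⟨x0.val + t, h⟩ : Fin n), j) ∈ S := by
    intro t
    induction t with
    | zero =>
      intro h j
      have he : (⟨x0.val + 0, h⟩ : Fin n) = x0 := Fin.ext (by simp)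
      rw [he]; exact hfull j
    | succ t ih =>
      intro h j
      have ht : x0.val + t < n := by omega
      exact hstep _ (ih ht) _ (Or.inl (by simp; omega)) j
  have down : ∀ t, ∀ (h : t ≤ x0.val), ∀ j, ((⟨x0.val - t, by omega⟩ : Fin n), j) ∈ S := by
    intro t
    induction t with
    | zero =>
      intro h j
      have he : (⟨x0.val - 0, by omega⟩ : Fin n) = x0 := Fin.ext (by simp)
      rw [he]; exact hfull j
    | succ t ih =>
      intro h j
      exact hstep _ (ih (by omega)) _ (Or.inr (by simp; omega)) j
  ext p
  simp only [Set.mem_univ, iff_true]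
  rcases le_or_gt x0.val p.1.val with hle | hlt
  · have h1 : x0.val + (p.1.val - x0.val) < n := by have := p.1.isLt; omega
    have := up (p.1.val - x0.val) h1 p.2
    have he : (⟨x0.val + (p.1.val - x0.val), h1⟩ : Fin n) = p.1 := Fin.ext (by simp; omega)
    rwa [he, Prod.mk.eta] at this
  · have h1 : x0.val - (x0.val - p.1.val) = p.1.val := by omega
    have := down (x0.val - p.1.val) (by omega) p.2
    have he : (⟨x0.val - (x0.val - p.1.val), by omega⟩ : Fin n) = p.1 := Fin.ext (by simp; omega)
    rwa [he, Prod.mk.eta] at this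

end Constraints

end Bridge

section Constructions

lemma ncard_le_two_of_subset_pair {α : Type*} {s : Set α} {a b : α} (h : s ⊆ {a, b}) :
    s.ncard ≤ 2 := by
  calc s.ncard ≤ ({a, b} : Set α).ncard :=
        Set.ncard_le_ncard h ((Set.finite_singleton _).insert _)
    _ ≤ 2 := by
        apply (Set.ncard_insert_le _ _).trans
        simp

def Cp (n x : ℕ) : Prop :=
  (n % 4 = 1 ∧ (x = 1 ∨ x % 4 = 0 ∨ x % 4 = 3)) ∨
  (n % 4 = 2 ∧ (x % 4 = 0 ∨ x % 4 = 1)) ∨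
  ((n % 4 = 0 ∨ n % 4 = 3) ∧ (x % 4 = 1 ∨ x % 4 = 2))

instance CpDec : ∀ n x, Decidable (Cp n x) := fun n x => by unfold Cp; infer_instance

lemma CpA1 {n x : ℕ} (hn : 2 ≤ n) (hx : x < n) (h : Cp n x) :
    (0 < x ∧ Cp n (x-1) ∧ ¬(x + 1 < n ∧ Cp n (x+1))) ∨
    (x + 1 < n ∧ Cp n (x+1) ∧ ¬(0 < x ∧ Cp n (x-1))) := by
  unfold Cp at *
  omega

lemma CpA2 {n x : ℕ} (hn : 2 ≤ n) (hx : x < n) (h : ¬ Cp n x) :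
    (0 < x ∧ Cp n (x-1)) ∨ (x + 1 < n ∧ Cp n (x+1)) := by
  unfold Cp at *
  omega

def Cp3 (n x : ℕ) : Prop := x % 3 = 1 ∨ (n % 3 = 1 ∧ x = n - 1)

instance Cp3Dec : ∀ n x, Decidable (Cp3 n x) := fun n x => by unfold Cp3; infer_instance

lemma Cp3A1 {n x : ℕ} (hx : x < n) (h : Cp3 n x) :
    ¬ (0 < x ∧ Cp3 n (x-1)) ∧ ¬ (x + 1 < n ∧ Cp3 n (x+1)) := by
  unfold Cp3 at *
  omega

lemma Cp3A2 {n x : ℕ} (hx : x < n) (h : ¬ Cp3 n x) :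
    (0 < x ∧ Cp3 n (x-1)) ∨ (x + 1 < n ∧ Cp3 n (x+1)) := by
  unfold Cp3 at *
  omega

-- counting lemmas
lemma cntA : ∀ N, ((Finset.range N).filter (fun x => x % 4 = 1 ∨ x % 4 = 2)).card
    = (N+2)/4 + (N+1)/4 := by
  intro N
  induction N with
  | zero => simp
  | succ N ih =>
    rw [Finset.range_add_one, Finset.filter_insert]
    by_cases h : N % 4 = 1 ∨ N % 4 = 2
    · rw [if_pos h, Finset.card_insert_of_notMem (by simp)]
      omega
    · rw [if_neg h]
      omega

lemma cntB : ∀ N, ((Finset.range N).filter (fun x => x % 4 = 0 ∨ x % 4 = 1)).card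
    = (N+3)/4 + (N+2)/4 := by
  intro N
  induction N with
  | zero => simp
  | succ N ih =>
    rw [Finset.range_add_one, Finset.filter_insert]
    by_cases h : N % 4 = 0 ∨ N % 4 = 1
    · rw [if_pos h, Finset.card_insert_of_notMem (by simp)]
      omega
    · rw [if_neg h]
      omega

lemma cntC : ∀ N, ((Finset.range N).filter (fun x => x = 1 ∨ x % 4 = 0 ∨ x % 4 = 3)).card
    = (if 2 ≤ N then 1 else 0) + (N+3)/4 + N/4 := by
  intro N
  induction N with
  | zero => simp
  | succ N ih =>
    rw [Finset.range_add_one, Finset.filter_insert]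
    by_cases h : N = 1 ∨ N % 4 = 0 ∨ N % 4 = 3
    · rw [if_pos h, Finset.card_insert_of_notMem (by simp)]
      rw [ih]
      split_ifs <;> omega
    · rw [if_neg h, ih]
      split_ifs <;> omega

lemma cnt3 : ∀ N, ((Finset.range N).filter (fun x => x % 3 = 1)).card = (N+1)/3 := by
  intro N
  induction N with
  | zero => simp
  | succ N ih =>
    rw [Finset.range_add_one, Finset.filter_insert]
    by_cases h : N % 3 = 1
    · rw [if_pos h, Finset.card_insert_of_notMem (by simp)]
      omega
    · rw [if_neg h]
      omega

lemma cnt3' {N : ℕ} (hN : 1 ≤ N) :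
    ((Finset.range N).filter (fun x => Cp3 N x)).card = (N+2)/3 := by
  by_cases h : N % 3 = 1
  · have : (Finset.range N).filter (fun x => Cp3 N x)
        = ((Finset.range N).filter (fun x => x % 3 = 1)) ∪ {N - 1} := by
      ext x
      simp only [Finset.mem_filter, Finset.mem_range, Finset.mem_union, Finset.mem_singleton]
      unfold Cp3
      constructor
      · rintro ⟨hx, h1 | ⟨-, h2⟩⟩
        · exact Or.inl ⟨hx, h1⟩
        · exact Or.inr h2
      · rintro (⟨hx, h1⟩ | rfl)
        · exact ⟨hx, Or.inl h1⟩
        · exact ⟨by omega, Or.inr ⟨h, rfl⟩⟩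
    rw [this, Finset.card_union_of_disjoint (by
      simp only [Finset.disjoint_singleton_right, Finset.mem_filter, Finset.mem_range]
      rintro ⟨-, h1⟩
      omega), cnt3 N]
    simp
    omega
  · have : (Finset.range N).filter (fun x => Cp3 N x)
        = (Finset.range N).filter (fun x => x % 3 = 1) := by
      apply Finset.filter_congr
      intro x hx
      simp only [Finset.mem_range] at hx
      unfold Cp3
      constructor
      · rintro (h1 | ⟨h2, -⟩)
        · exact h1
        · omega
      · exact Or.inl
    rw [this, cnt3 N]
    omega

lemma cntCp {N : ℕ} (hN : 2 ≤ N) :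
    ((Finset.range N).filter (fun x => Cp N x)).card = 2 * ((N+3)/4) := by
  have hcong : ∀ (P : ℕ → Prop) [DecidablePred P], (∀ x, x < N → (Cp N x ↔ P x)) →
      (Finset.range N).filter (fun x => Cp N x) = (Finset.range N).filter P := by
    intro P _ hP
    apply Finset.filter_congr
    intro x hx
    simp only [Finset.mem_range] at hx
    exact hP x hx
  rcases h4 : N % 4 with _ | _ | _ | k
  · rw [hcong (fun x => x % 4 = 1 ∨ x % 4 = 2) (fun x _ => by unfold Cp; omega), cntA]
    omega
  · rw [hcong (fun x => x = 1 ∨ x % 4 = 0 ∨ x % 4 = 3) (fun x _ => by unfold Cp; omega), cntC]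
    rw [if_pos hN]
    omega
  · rw [hcong (fun x => x % 4 = 0 ∨ x % 4 = 1) (fun x _ => by unfold Cp; omega), cntB]
    omega
  · have hk : N % 4 = 3 := by omega
    rw [hcong (fun x => x % 4 = 1 ∨ x % 4 = 2) (fun x _ => by unfold Cp; omega), cntA]
    omega

lemma card_filter_val {n : ℕ} (P : ℕ → Prop) [DecidablePred P] :
    (Finset.univ.filter (fun c : Fin n => P c.val)).card = ((Finset.range n).filter P).card := by
  rw [Finset.card_filter, Finset.card_filter]
  exact Fin.sum_univ_eq_sum_range (fun i => if P i then 1 else 0) n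

end Constructions

section UpperSets

variable {n m : ℕ}

def Stot (n m : ℕ) : Set (Fin n × Fin m) := {p | Cp n p.1.val ∧ p.2.val = 0}

lemma Stot_card (hn : 2 ≤ n) (hm : 2 ≤ m) : (Stot n m).ncard = 2 * ((n+3)/4) := by
  have h0 : (0:ℕ) < m := by omega
  have himg : Stot n m = (fun c : Fin n => (c, (⟨0, h0⟩ : Fin m))) '' {c : Fin n | Cp n c.val} := by
    ext ⟨c, j⟩
    simp only [Stot, Set.mem_setOf_eq, Set.mem_image]
    constructor
    · rintro ⟨hc, hj⟩
      exact ⟨c, hc, by rw [Prod.mk.injEq]; exact ⟨rfl, Fin.ext hj.symm⟩⟩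
    · rintro ⟨c', hc', heq⟩
      rw [Prod.mk.injEq] at heq
      obtain ⟨h1, h2⟩ := heq
      subst h1
      exact ⟨hc', by rw [← h2]⟩
  rw [himg, Set.ncard_image_of_injective _ (fun a b hab => congrArg Prod.fst hab)]
  have hset : {c : Fin n | Cp n c.val} = ↑(Finset.univ.filter (fun c : Fin n => Cp n c.val)) := by
    ext c; simp
  rw [hset, Set.ncard_coe_finset, card_filter_val, cntCp hn]

lemma Stot_total (hn : 2 ≤ n) (hm : 2 ≤ m) (v : Fin n × Fin m) :
    1 ≤ ((PG n m).neighborSet v ∩ Stot n m).ncard ∧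
      ((PG n m).neighborSet v ∩ Stot n m).ncard ≤ 2 := by
  obtain ⟨x, y⟩ := v
  have h0 : (0:ℕ) < m := by omega
  set y0 : Fin m := ⟨0, h0⟩ with hy0
  have hmem : ∀ c : Fin n, Cp n c.val → (c.val + 1 = x.val ∨ x.val + 1 = c.val) →
      (c, y0) ∈ (PG n m).neighborSet (x, y) ∩ Stot n m := by
    intro c hc hadj
    refine ⟨?_, hc, rfl⟩
    rw [SimpleGraph.mem_neighborSet, PG_adj]
    exact Or.inl (by dsimp; omega)
  by_cases hx : Cp n x.val
  · rcases CpA1 hn x.isLt hx with ⟨hx0, hcm, hnp⟩ | ⟨hxn, hcp, hnm⟩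
    · set p1 : Fin n := ⟨x.val - 1, by omega⟩ with hp1
      constructor
      · exact (Set.ncard_pos (Set.toFinite _)).mpr
          ⟨(p1, y0), hmem p1 hcm (Or.inl (by simp [hp1]; omega))⟩
      · apply ncard_le_two_of_subset_pair (a := (p1, y0)) (b := (x, y0))
        rintro ⟨c, j⟩ ⟨hadj, hc, hj⟩
        rw [SimpleGraph.mem_neighborSet, PG_adj] at hadj
        dsimp only at hadj
        have hcj : j = y0 := Fin.ext hj
        rcases hadj with (h | h) | ⟨e, hy⟩
        · exact absurd ⟨by have := c.isLt; omega, by rw [h]; exact hc⟩ hnp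
        · left
          rw [Prod.mk.injEq]
          exact ⟨Fin.ext (by simp [hp1]; omega), hcj⟩
        · right
          show (c, j) = _
          rw [Prod.mk.injEq]
          exact ⟨e.symm, hcj⟩
    · set p1 : Fin n := ⟨x.val + 1, hxn⟩ with hp1
      constructor
      · exact (Set.ncard_pos (Set.toFinite _)).mpr
          ⟨(p1, y0), hmem p1 hcp (Or.inr (by simp [hp1]))⟩
      · apply ncard_le_two_of_subset_pair (a := (p1, y0)) (b := (x, y0))
        rintro ⟨c, j⟩ ⟨hadj, hc, hj⟩
        rw [SimpleGraph.mem_neighborSet, PG_adj] at hadj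
        dsimp only at hadj
        have hcj : j = y0 := Fin.ext hj
        rcases hadj with (h | h) | ⟨e, hy⟩
        · left
          rw [Prod.mk.injEq]
          exact ⟨Fin.ext (by simp [hp1]; omega), hcj⟩
        · exact absurd ⟨by omega, by rw [show x.val - 1 = c.val by omega]; exact hc⟩ hnm
        · right
          show (c, j) = _
          rw [Prod.mk.injEq]
          exact ⟨e.symm, hcj⟩
  · constructor
    · rcases CpA2 hn x.isLt hx with ⟨hx0, hcm⟩ | ⟨hxn, hcp⟩
      · exact (Set.ncard_pos (Set.toFinite _)).mpr
          ⟨((⟨x.val - 1, by omega⟩ : Fin n), y0),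
            hmem _ (by simpa using hcm) (Or.inl (by simp; omega))⟩
      · exact (Set.ncard_pos (Set.toFinite _)).mpr
          ⟨((⟨x.val + 1, hxn⟩ : Fin n), y0), hmem _ (by simpa using hcp) (Or.inr (by simp))⟩
    · apply ncard_le_two_of_subset_pair
        (a := ((⟨x.val - 1, by have := x.isLt; omega⟩ : Fin n), y0))
        (b := ((⟨min (x.val + 1) (n-1), by omega⟩ : Fin n), y0))
      rintro ⟨c, j⟩ ⟨hadj, hc, hj⟩
      rw [SimpleGraph.mem_neighborSet, PG_adj] at hadj
      dsimp only at hadj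
      have hcj : j = y0 := Fin.ext hj
      rcases hadj with (h | h) | ⟨e, hy⟩
      · right
        show (c, j) = _
        rw [Prod.mk.injEq]
        exact ⟨Fin.ext (by simp; have := c.isLt; omega), hcj⟩
      · left
        rw [Prod.mk.injEq]
        exact ⟨Fin.ext (by simp; omega), hcj⟩
      · exact absurd (by rw [e]; exact hc) hx

def Ssm (n m : ℕ) : Set (Fin n × Fin m) := {p | Cp3 n p.1.val ∧ p.2.val = m - 2}

lemma Ssm_card (hn : 2 ≤ n) (hm : 2 ≤ m) : (Ssm n m).ncard = (n+2)/3 := by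
  have h0 : m - 2 < m := by omega
  have himg : Ssm n m = (fun c : Fin n => (c, (⟨m - 2, h0⟩ : Fin m))) '' {c : Fin n | Cp3 n c.val} := by
    ext ⟨c, j⟩
    simp only [Ssm, Set.mem_setOf_eq, Set.mem_image]
    constructor
    · rintro ⟨hc, hj⟩
      exact ⟨c, hc, by rw [Prod.mk.injEq]; exact ⟨rfl, Fin.ext hj.symm⟩⟩
    · rintro ⟨c', hc', heq⟩
      rw [Prod.mk.injEq] at heq
      obtain ⟨h1, h2⟩ := heq
      subst h1
      exact ⟨hc', by rw [← h2]⟩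
  rw [himg, Set.ncard_image_of_injective _ (fun a b hab => congrArg Prod.fst hab)]
  have hset : {c : Fin n | Cp3 n c.val} = ↑(Finset.univ.filter (fun c : Fin n => Cp3 n c.val)) := by
    ext c; simp
  rw [hset, Set.ncard_coe_finset, card_filter_val, cnt3' (by omega)]

lemma Ssm_oneK (hn : 2 ≤ n) (hm : 2 ≤ m) (hm3 : m ≤ 3) (v : Fin n × Fin m) (hv : v ∉ Ssm n m) :
    1 ≤ ((PG n m).neighborSet v ∩ Ssm n m).ncard ∧
      ((PG n m).neighborSet v ∩ Ssm n m).ncard ≤ 2 := by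
  obtain ⟨x, y⟩ := v
  have h0 : m - 2 < m := by omega
  set j0 : Fin m := ⟨m - 2, h0⟩ with hj0
  have hmem : ∀ c : Fin n, Cp3 n c.val → (c.val + 1 = x.val ∨ x.val + 1 = c.val) →
      (c, j0) ∈ (PG n m).neighborSet (x, y) ∩ Ssm n m := by
    intro c hc hadj
    refine ⟨?_, hc, rfl⟩
    rw [SimpleGraph.mem_neighborSet, PG_adj]
    exact Or.inl (by dsimp; omega)
  by_cases hx : Cp3 n x.val
  · have hyne : y.val ≠ m - 2 := fun h => hv ⟨hx, h⟩
    have hself : (x, j0) ∈ (PG n m).neighborSet (x, y) ∩ Ssm n m := by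
      refine ⟨?_, hx, rfl⟩
      rw [SimpleGraph.mem_neighborSet, PG_adj]
      refine Or.inr ⟨rfl, ?_⟩
      dsimp
      show y.val + 1 = m - 2 ∨ m - 2 + 1 = y.val
      have := y.isLt
      omega
    obtain ⟨hnm, hnp⟩ := Cp3A1 x.isLt hx
    constructor
    · exact (Set.ncard_pos (Set.toFinite _)).mpr ⟨(x, j0), hself⟩
    · apply ncard_le_two_of_subset_pair (a := (x, j0)) (b := (x, j0))
      rintro ⟨c, j⟩ ⟨hadj, hc, hj⟩
      rw [SimpleGraph.mem_neighborSet, PG_adj] at hadj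
      dsimp only at hadj
      have hcj : j = j0 := Fin.ext hj
      rcases hadj with (h | h) | ⟨e, hy⟩
      · exact absurd ⟨by have := c.isLt; omega, by rw [h]; exact hc⟩ hnp
      · exact absurd ⟨by omega, by rw [show x.val - 1 = c.val by omega]; exact hc⟩ hnm
      · simp only [Set.mem_insert_iff, Set.mem_singleton_iff]
        left
        rw [Prod.mk.injEq]
        exact ⟨e.symm, hcj⟩
  · constructor
    · rcases Cp3A2 x.isLt hx with ⟨hx0, hcm⟩ | ⟨hxn, hcp⟩
      · exact (Set.ncard_pos (Set.toFinite _)).mpr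
          ⟨((⟨x.val - 1, by omega⟩ : Fin n), j0),
            hmem _ (by simpa using hcm) (Or.inl (by simp; omega))⟩
      · exact (Set.ncard_pos (Set.toFinite _)).mpr
          ⟨((⟨x.val + 1, hxn⟩ : Fin n), j0), hmem _ (by simpa using hcp) (Or.inr (by simp))⟩
    · apply ncard_le_two_of_subset_pair
        (a := ((⟨x.val - 1, by have := x.isLt; omega⟩ : Fin n), j0))
        (b := ((⟨min (x.val + 1) (n-1), by omega⟩ : Fin n), j0))
      rintro ⟨c, j⟩ ⟨hadj, hc, hj⟩
      rw [SimpleGraph.mem_neighborSet, PG_adj] at hadj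
      dsimp only at hadj
      have hcj : j = j0 := Fin.ext hj
      rcases hadj with (h | h) | ⟨e, hy⟩
      · right
        show (c, j) = _
        rw [Prod.mk.injEq]
        exact ⟨Fin.ext (by simp; have := c.isLt; omega), hcj⟩
      · left
        rw [Prod.mk.injEq]
        exact ⟨Fin.ext (by simp; omega), hcj⟩
      · exact absurd (by rw [e]; exact hc) hx

end UpperSets

-- ===== lower bound wrappers =====
section Lower

variable {n m : ℕ}

open Finset

lemma sum_a_eq (S : Set (Fin n × Fin m)) :
    ∑ i ∈ range (n+1), (fun i => if 1 ≤ i then cc S (i-1) else 0) i = S.ncard := by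
  rw [Finset.sum_range_succ']
  simp only [show ¬ (1 ≤ 0) by omega, if_neg, if_false]
  rw [add_zero]
  rw [← sum_cc S]
  apply Finset.sum_congr rfl
  intro i _
  simp

lemma lower_total (hn : 2 ≤ n) (hm : 2 ≤ m) {S : Set (Fin n × Fin m)}
    (hS1 : ∀ v, 1 ≤ ((PG n m).neighborSet v ∩ S).ncard)
    (hS2 : ∀ v, ((PG n m).neighborSet v ∩ S).ncard ≤ 2) :
    2 * ((n + 3) / 4) ≤ S.ncard := by
  set a : ℕ → ℕ := fun i => if 1 ≤ i then cc S (i-1) else 0 with ha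
  rw [← sum_a_eq S]
  apply sumGeMain n a (by simp [ha])
  · intro i hi
    simp only [ha]
    split_ifs with h
    · exact cc_out S (by omega)
    · rfl
  · intro i hi1 hin hai
    simp only [ha, if_pos hi1] at hai
    have h := total_C1 hm hS2 hai
    rcases Nat.eq_or_lt_of_le hi1 with h1 | h1
    · -- i = 1
      subst h1
      have := h.1
      norm_num at this
      simp only [ha]
      norm_num
      omega
    · simp only [ha]
      rw [if_pos (by omega), if_pos (by omega)]
      have h2 := h.2 (by omega)
      rw [show i - 1 - 1 = i - 1 - 1 from rfl, show i - 1 + 1 = i by omega] at h2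
      rw [show i - 1 - 1 = i - 2 by omega] at h2
      rw [show i + 1 - 1 = i by omega, show i - 1 - 1 = i - 2 by omega]
      omega
  · intro i hi1 hin him hip
    simp only [ha, if_pos hi1]
    simp only [ha, if_pos (show 1 ≤ i + 1 by omega)] at hip
    rw [show i + 1 - 1 = i by omega] at hip
    apply total_C2 hm hS1 (show i - 1 < n by omega) _ (by rw [show i - 1 + 1 = i by omega]; exact hip)
    intro hpos
    rcases Nat.eq_or_lt_of_le hi1 with h1 | h1
    · omega
    · simp only [ha, if_pos (show 1 ≤ i - 1 by omega)] at him
      rwa [show i - 1 - 1 = i - 1 - 1 from rfl] at him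

lemma lower_small (hn : 2 ≤ n) (hm : 2 ≤ m) {S : Set (Fin n × Fin m)}
    (hS1 : ∀ v ∉ S, 1 ≤ ((PG n m).neighborSet v ∩ S).ncard) :
    (n + 2) / 3 ≤ S.ncard := by
  set a : ℕ → ℕ := fun i => if 1 ≤ i then cc S (i-1) else 0 with ha
  rw [← sum_a_eq S]
  apply sumGeThird n a (by simp [ha])
  · intro i hi
    simp only [ha]
    split_ifs with h
    · exact cc_out S (by omega)
    · rfl
  · intro i hi1 hin
    have h := oneK_D (by omega : 0 < m) hS1 (show i - 1 < n by omega) (S := S)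
    rcases Nat.eq_or_lt_of_le hi1 with h1 | h1
    · subst h1
      norm_num at h
      simp only [ha]
      norm_num
      omega
    · simp only [ha]
      rw [if_pos (by omega), if_pos (by omega), if_pos (by omega)]
      rw [if_pos (by omega : 0 < i - 1)] at h
      rw [show i - 1 - 1 = i - 2 by omega] at h ⊢
      rw [show i + 1 - 1 = i - 1 + 1 by omega]
      omega

lemma lower_big (hn : 2 ≤ n) (hm : 4 ≤ m) {S : Set (Fin n × Fin m)}
    (hS1 : ∀ v ∉ S, 1 ≤ ((PG n m).neighborSet v ∩ S).ncard)
    (hS2 : ∀ v ∉ S, ((PG n m).neighborSet v ∩ S).ncard ≤ 2) :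
    2 * ((n + 3) / 4) ≤ S.ncard := by
  by_cases hfull : ∃ x : Fin n, ∀ j : Fin m, (x, j) ∈ S
  · obtain ⟨x0, hx0⟩ := hfull
    rw [full_univ (by omega) hS2 x0 hx0, Set.ncard_univ]
    have hcard : Nat.card (Fin n × Fin m) = n * m := by simp
    rw [hcard]
    have h1 : 2 * n ≤ n * m := by
      calc 2 * n = n * 2 := by ring
        _ ≤ n * m := Nat.mul_le_mul_left n (by omega)
    have h2 : (n + 3) / 4 ≤ n := by omega
    omega
  · push_neg at hfull
    have hnf : ∀ x : Fin n, ∃ j, (x, j) ∉ S := hfull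
    set a : ℕ → ℕ := fun i => if 1 ≤ i then cc S (i-1) else 0 with ha
    rw [← sum_a_eq S]
    apply sumGeMain n a (by simp [ha])
    · intro i hi
      simp only [ha]
      split_ifs with h
      · exact cc_out S (by omega)
      · rfl
    · intro i hi1 hin hai
      simp only [ha, if_pos hi1] at hai
      have h := oneK_C1 (by omega) hS2 hnf hai
      rcases Nat.eq_or_lt_of_le hi1 with h1 | h1
      · subst h1
        have := h.1
        norm_num at this
        simp only [ha]
        norm_num
        omega
      · simp only [ha]
        rw [if_pos (by omega), if_pos (by omega)]
        have h2 := h.2 (by omega)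
        rw [show i - 1 + 1 = i by omega] at h2
        rw [show i - 1 - 1 = i - 2 by omega] at h2
        rw [show i + 1 - 1 = i by omega, show i - 1 - 1 = i - 2 by omega]
        omega
    · intro i hi1 hin him hip
      simp only [ha, if_pos hi1]
      simp only [ha, if_pos (show 1 ≤ i + 1 by omega)] at hip
      rw [show i + 1 - 1 = i by omega] at hip
      apply oneK_C2 hm hS1 (show i - 1 < n by omega) _
        (by rw [show i - 1 + 1 = i by omega]; exact hip)
      intro hpos
      rcases Nat.eq_or_lt_of_le hi1 with h1 | h1
      · omega
      · simp only [ha, if_pos (show 1 ≤ i - 1 by omega)] at him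
        exact him

end Lower


/-- For `n, m ≥ 2`, `γ_{t[1,2]}(P_n ∘ P_m) = 2⌈n/4⌉`; moreover
`γ_{[1,2]}(P_n ∘ P_m) = ⌈n/3⌉` for `m ∈ {2,3}` and `γ_{[1,2]}(P_n ∘ P_m) = 2⌈n/4⌉`
for `m > 3`. -/
theorem stmt19 (n m : ℕ) (hn : 2 ≤ n) (hm : 2 ≤ m) :
    gammaTotalOneK ((SimpleGraph.pathGraph n).lexProd (SimpleGraph.pathGraph m)) 2 =
        2 * ((n + 3) / 4) ∧
    (m = 2 ∨ m = 3 →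
      gammaOneK ((SimpleGraph.pathGraph n).lexProd (SimpleGraph.pathGraph m)) 2 =
        (n + 2) / 3) ∧
    (3 < m →
      gammaOneK ((SimpleGraph.pathGraph n).lexProd (SimpleGraph.pathGraph m)) 2 =
        2 * ((n + 3) / 4)) := by
  set G := (SimpleGraph.pathGraph n).lexProd (SimpleGraph.pathGraph m) with hG
  have hmem_tot : 2 * ((n + 3) / 4) ∈
      {k | ∃ S : Set (Fin n × Fin m), IsTotalOneK G 2 S ∧ S.ncard = k} :=
    ⟨Stot n m, fun v => Stot_total hn hm v, Stot_card hn hm⟩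
  have hmem_one : 2 * ((n + 3) / 4) ∈
      {k | ∃ S : Set (Fin n × Fin m), IsOneK G 2 S ∧ S.ncard = k} :=
    ⟨Stot n m, fun v _ => Stot_total hn hm v, Stot_card hn hm⟩
  refine ⟨?_, ?_, ?_⟩
  · apply le_antisymm
    · exact Nat.sInf_le hmem_tot
    · apply le_csInf ⟨_, hmem_tot⟩
      rintro k ⟨S, hS, rfl⟩
      exact lower_total hn hm (fun v => (hS v).1) (fun v => (hS v).2)
  · intro hm23
    have hm3 : m ≤ 3 := by rcases hm23 with rfl | rfl <;> omega
    have hmem_sm : (n + 2) / 3 ∈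
        {k | ∃ S : Set (Fin n × Fin m), IsOneK G 2 S ∧ S.ncard = k} :=
      ⟨Ssm n m, fun v hv => Ssm_oneK hn hm hm3 v hv, Ssm_card hn hm⟩
    apply le_antisymm
    · exact Nat.sInf_le hmem_sm
    · apply le_csInf ⟨_, hmem_sm⟩
      rintro k ⟨S, hS, rfl⟩
      exact lower_small hn hm (fun v hv => (hS v hv).1)
  · intro hm4
    apply le_antisymm
    · exact Nat.sInf_le hmem_one
    · apply le_csInf ⟨_, hmem_one⟩
      rintro k ⟨S, hS, rfl⟩
      exact lower_big hn (by omega) (fun v hv => (hS v hv).1) (fun v hv => (hS v hv).2)
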